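/- Fix an integer n ≥ 1, a mass m > 0 and an exponent γ with 1 < γ ≤ 2, and set s(x) := m^{n(γ−1)/2} x^{γ}/(γ−1) for x ≥ 0. Then for all x > 0 and all y ≥ 0, s(y) − s(x) − s′(x)(y − x) ≥ (γ/2) · m^{n(γ−1)/2} · max(x, y)^{γ−2} · (y − x)², where s′(x) = γ m^{n(γ−1)/2} x^{γ−1}/(γ−1). (Equivalently, the relative pressure s(y|x) is bounded below by (γ/2) m^{n(γ−1)/2} min(x^{γ−2}, y^{γ−2}) (y−x)².) -/

import Mathlib

/-- The isentropic internal-energy (pressure) function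
`s(x) = m^{n(γ−1)/2} x^γ/(γ−1)`. -/
noncomputable def sFn (n : ℕ) (m γ : ℝ) (x : ℝ) : ℝ :=
  m ^ ((n : ℝ) * (γ - 1) / 2) * x ^ γ / (γ - 1)

/-- Its derivative `s′(x) = γ m^{n(γ−1)/2} x^{γ−1}/(γ−1)`. -/
noncomputable def sFn' (n : ℕ) (m γ : ℝ) (x : ℝ) : ℝ :=
  γ * m ^ ((n : ℝ) * (γ - 1) / 2) * x ^ (γ - 1) / (γ - 1)

open Set in
/-- Core inequality for `f(t) = A t^γ/(γ-1)` with `A > 0`. -/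
theorem rpow_convex_aux (A γ : ℝ) (hA : 0 < A) (hγ : 1 < γ) (hγ' : γ ≤ 2)
    (x y : ℝ) (hx : 0 < x) (hy : 0 ≤ y) :
    A * y ^ γ / (γ - 1) - A * x ^ γ / (γ - 1) - γ * A * x ^ (γ - 1) / (γ - 1) * (y - x) ≥
      γ / 2 * A * max x y ^ (γ - 2) * (y - x) ^ 2 := by
  set M : ℝ := max x y with hM
  have hMpos : 0 < M := lt_max_of_lt_left hx
  set K : ℝ := γ / 2 * A * M ^ (γ - 2) with hK
  have hγ0 : 0 < γ - 1 := by linarith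
  set φ : ℝ → ℝ := fun t => A * t ^ γ / (γ - 1) - K * t ^ 2 with hφ
  set φ' : ℝ → ℝ := fun t => γ * A * t ^ (γ - 1) / (γ - 1) - 2 * K * t with hφ'
  set φ'' : ℝ → ℝ := fun t => γ * A * t ^ (γ - 2) - 2 * K with hφ''
  have hd1 : ∀ t : ℝ, 0 < t → HasDerivAt φ (φ' t) t := by
    intro t ht
    have h1 : HasDerivAt (fun u : ℝ => u ^ γ) (γ * t ^ (γ - 1)) t :=
      Real.hasDerivAt_rpow_const (Or.inl ht.ne')
    have h2 : HasDerivAt (fun u : ℝ => u ^ 2) (2 * t) t := by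
      simpa using hasDerivAt_pow 2 t
    have := ((h1.const_mul A).div_const (γ - 1)).sub (h2.const_mul K)
    refine this.congr_deriv ?_
    simp [hφ']
    ring
  have hd2 : ∀ t : ℝ, 0 < t → HasDerivAt φ' (φ'' t) t := by
    intro t ht
    have h1 : HasDerivAt (fun u : ℝ => u ^ (γ - 1)) ((γ - 1) * t ^ (γ - 1 - 1)) t :=
      Real.hasDerivAt_rpow_const (Or.inl ht.ne')
    have h2 : HasDerivAt (fun u : ℝ => 2 * K * u) (2 * K) t := by
      simpa using (hasDerivAt_id t).const_mul (2 * K)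
    have := ((h1.const_mul (γ * A)).div_const (γ - 1)).sub h2
    refine this.congr_deriv ?_
    have : γ - 1 - 1 = γ - 2 := by ring
    rw [this]
    field_simp [hφ'']
    ring
  have hcont : ContinuousOn φ (Icc 0 M) := by
    intro t ht
    have h1 : ContinuousAt (fun u : ℝ => u ^ γ) t :=
      Real.continuousAt_rpow_const t γ (Or.inr (by linarith))
    have h2 : ContinuousAt φ t := by
      apply ContinuousAt.sub
      · exact (h1.const_mul A).div_const _
      · exact ((continuous_pow 2).continuousAt).const_mul K
    exact h2.continuousWithinAt
  have hconv : ConvexOn ℝ (Icc 0 M) φ := by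
    apply convexOn_of_hasDerivWithinAt2_nonneg (convex_Icc 0 M) hcont
      (f' := φ') (f'' := φ'')
    · intro t ht
      rw [interior_Icc] at ht
      exact (hd1 t ht.1).hasDerivWithinAt
    · intro t ht
      rw [interior_Icc] at ht
      exact (hd2 t ht.1).hasDerivWithinAt
    · intro t ht
      rw [interior_Icc] at ht
      have hle : M ^ (γ - 2) ≤ t ^ (γ - 2) :=
        Real.rpow_le_rpow_of_nonpos ht.1 ht.2.le (by linarith)
      have : 2 * K = γ * A * M ^ (γ - 2) := by rw [hK]; ring
      simp only [hφ'', this]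
      have hγA : 0 < γ * A := by positivity
      nlinarith [mul_le_mul_of_nonneg_left hle hγA.le]
  have hxM : x ∈ Icc 0 M := ⟨hx.le, le_max_left x y⟩
  have hyM : y ∈ Icc 0 M := ⟨hy, le_max_right x y⟩
  -- tangent line inequality: φ y - φ x ≥ φ' x * (y - x)
  have htan : φ y - φ x ≥ φ' x * (y - x) := by
    rcases lt_trichotomy x y with h | h | h
    · have := hconv.le_slope_of_hasDerivAt hxM hyM h (hd1 x hx)
      rw [slope_def_field] at this
      have h' : 0 < y - x := by linarith
      calc φ' x * (y - x) ≤ (φ y - φ x) / (y - x) * (y - x) :=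
            mul_le_mul_of_nonneg_right this h'.le
          _ = φ y - φ x := by field_simp
    · simp [h]
    · have := hconv.slope_le_of_hasDerivAt hyM hxM h (hd1 x hx)
      rw [slope_def_field] at this
      have h' : 0 < x - y := by linarith
      have h2 := mul_le_mul_of_nonneg_right this h'.le
      rw [div_mul_cancel₀ _ h'.ne'] at h2
      nlinarith
  -- unfold
  have expand : φ y - φ x - φ' x * (y - x) =
      A * y ^ γ / (γ - 1) - A * x ^ γ / (γ - 1) - γ * A * x ^ (γ - 1) / (γ - 1) * (y - x)
        - K * (y - x) ^ 2 := by
    simp only [hφ, hφ']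
    ring
  have : A * y ^ γ / (γ - 1) - A * x ^ γ / (γ - 1) - γ * A * x ^ (γ - 1) / (γ - 1) * (y - x)
      - K * (y - x) ^ 2 ≥ 0 := by rw [← expand]; linarith
  linarith

/-- For `n ≥ 1`, `m > 0` and `1 < γ ≤ 2`, the relative pressure is bounded
below: for all `x > 0` and `y ≥ 0`,
`s(y) − s(x) − s′(x)(y − x) ≥ (γ/2) m^{n(γ−1)/2} max(x,y)^{γ−2} (y − x)²`. -/
theorem sRel_lower_bound (n : ℕ) (hn : 1 ≤ n) (m γ : ℝ) (hm : 0 < m)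
    (hγ : 1 < γ) (hγ' : γ ≤ 2) (x y : ℝ) (hx : 0 < x) (hy : 0 ≤ y) :
    sFn n m γ y - sFn n m γ x - sFn' n m γ x * (y - x) ≥
      γ / 2 * m ^ ((n : ℝ) * (γ - 1) / 2) * max x y ^ (γ - 2) * (y - x) ^ 2 := by

  have hA : 0 < m ^ ((n : ℝ) * (γ - 1) / 2) := Real.rpow_pos_of_pos hm _
  have := rpow_convex_aux (m ^ ((n : ℝ) * (γ - 1) / 2)) γ hA hγ hγ' x y hx hy
  simp only [sFn, sFn']
  exact this
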